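/- In the bicameral game with parameters (m_s, m_r, q_s, q_r), where m_s < m_r, m_s is odd, m_r is even, and the quotas are simple majorities (q_s = ⌈(m_s+1)/2⌉ and q_r = ⌈(m_r+1)/2⌉): if m_r < 2·m_s, then c_s(q_s + q_r) < c_r(q_s + q_r); and if m_r = 2·m_s, then c_s(q_s + q_r) = c_r(q_s + q_r). -/

import Mathlib

open Finset Sum

lemma filterLeft_card {m n : ℕ} (S : Finset (Fin m ⊕ Fin n)) :
    (S.filter (fun p => p.isLeft)).card = S.toLeft.card := by
  have : S.filter (fun p => p.isLeft) = S.toLeft.map ⟨inl, inl_injective⟩ := by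
    ext x; cases x <;> simp
  rw [this, card_map]

lemma filterRight_card {m n : ℕ} (S : Finset (Fin m ⊕ Fin n)) :
    (S.filter (fun p => p.isRight)).card = S.toRight.card := by
  have : S.filter (fun p => p.isRight) = S.toRight.map ⟨inr, inr_injective⟩ := by
    ext x; cases x <;> simp
  rw [this, card_map]

lemma toLeft_erase_inl {m n : ℕ} (S : Finset (Fin m ⊕ Fin n)) (a : Fin m) :
    (S.erase (inl a)).toLeft = S.toLeft.erase a := by
  ext x; simp [and_comm]

lemma toRight_erase_inl {m n : ℕ} (S : Finset (Fin m ⊕ Fin n)) (a : Fin m) :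
    (S.erase (inl a)).toRight = S.toRight := by
  ext x; simp

lemma toLeft_erase_inr {m n : ℕ} (S : Finset (Fin m ⊕ Fin n)) (b : Fin n) :
    (S.erase (inr b)).toLeft = S.toLeft := by
  ext x; simp

lemma toRight_erase_inr {m n : ℕ} (S : Finset (Fin m ⊕ Fin n)) (b : Fin n) :
    (S.erase (inr b)).toRight = S.toRight.erase b := by
  ext x; simp [and_comm]

lemma count_mem_subsets {n k : ℕ} (hk : 1 ≤ k) (a : Fin n) :
    ((Finset.univ.powersetCard k).filter (fun A => a ∈ A)).card = (n-1).choose (k-1) := by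
  have h1 : (Finset.univ.erase a).card = n - 1 := by
    rw [card_erase_of_mem (mem_univ a), card_univ, Fintype.card_fin]
  rw [← h1, ← Finset.card_powersetCard (k-1) (Finset.univ.erase a)]
  apply Finset.card_bij (fun A _ => A.erase a)
  · intro A hA
    simp only [mem_filter, mem_powersetCard] at hA
    simp only [mem_powersetCard]
    constructor
    · intro x hx; simp only [mem_erase] at hx ⊢; exact ⟨hx.1, mem_univ x⟩
    · rw [card_erase_of_mem hA.2, hA.1.2]
  · intro A hA B hB h
    simp only [mem_filter, mem_powersetCard] at hA hB
    have := congrArg (insert a) h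
    rwa [insert_erase hA.2, insert_erase hB.2] at this
  · intro B hB
    simp only [mem_powersetCard] at hB
    have haB : a ∉ B := fun h => by simpa using hB.1 h
    refine ⟨insert a B, ?_, ?_⟩
    · simp only [mem_filter, mem_powersetCard, mem_insert]
      refine ⟨⟨fun x _ => mem_univ x, ?_⟩, by simp⟩
      rw [card_insert_of_notMem haB, hB.2]
      omega
    · rw [erase_insert haB]


/-- A coalition in the bicameral game with `ms` senators (the left summands) and `mr`
representatives (the right summands) is winning iff it contains at least `qs` senators
and at least `qr` representatives. -/
def bicamWinning (ms mr qs qr : ℕ) (S : Finset (Fin ms ⊕ Fin mr)) : Prop :=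
  qs ≤ (S.filter (fun p => p.isLeft)).card ∧ qr ≤ (S.filter (fun p => p.isRight)).card

/-- The number of coalitions of size `k` in which player `i` is critical in the
bicameral game with parameters `(ms, mr, qs, qr)`. -/
noncomputable def bicamCrit (ms mr qs qr : ℕ) (i : Fin ms ⊕ Fin mr) (k : ℕ) : ℕ :=
  Set.ncard {S : Finset (Fin ms ⊕ Fin mr) |
    S.card = k ∧ i ∈ S ∧ bicamWinning ms mr qs qr S ∧
      ¬ bicamWinning ms mr qs qr (S.erase i)}

lemma crit_left_eq (ms mr qs qr : ℕ) (hqs : 1 ≤ qs) (s : Fin ms) :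
    bicamCrit ms mr qs qr (Sum.inl s) (qs+qr) = (ms-1).choose (qs-1) * mr.choose qr := by
  classical
  have hset : {S : Finset (Fin ms ⊕ Fin mr) |
      S.card = qs+qr ∧ Sum.inl s ∈ S ∧ bicamWinning ms mr qs qr S ∧
        ¬ bicamWinning ms mr qs qr (S.erase (Sum.inl s))}
      = ↑(Finset.univ.filter (fun S : Finset (Fin ms ⊕ Fin mr) =>
          s ∈ S.toLeft ∧ S.toLeft.card = qs ∧ S.toRight.card = qr)) := by
    ext S
    simp only [Set.mem_setOf_eq, coe_filter, mem_univ, true_and]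
    unfold bicamWinning
    rw [filterLeft_card, filterRight_card, filterLeft_card, filterRight_card,
        toLeft_erase_inl, toRight_erase_inl]
    have hsum := card_toLeft_add_card_toRight (u := S)
    constructor
    · rintro ⟨hcard, hmem, ⟨h1, h2⟩, -⟩
      exact ⟨by simpa using hmem, by omega, by omega⟩
    · rintro ⟨hmem, h1, h2⟩
      refine ⟨by omega, by simpa using hmem, ⟨le_of_eq h1.symm, le_of_eq h2.symm⟩, ?_⟩
      rintro ⟨h3, -⟩
      rw [card_erase_of_mem hmem] at h3
      omega
  rw [bicamCrit, hset, Set.ncard_coe_finset]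
  have h2 : mr.choose qr = ((Finset.univ : Finset (Fin mr)).powersetCard qr).card := by
    rw [Finset.card_powersetCard, card_univ, Fintype.card_fin]
  rw [← count_mem_subsets hqs s, h2, ← Finset.card_product]
  refine Finset.card_bij' (fun S _ => (S.toLeft, S.toRight))
    (fun p _ => p.1.disjSum p.2) ?_ ?_ ?_ ?_
  · intro S hS
    simp only [mem_filter, mem_univ, true_and] at hS
    simp only [mem_product, mem_filter, mem_powersetCard]
    exact ⟨⟨⟨fun x _ => mem_univ x, hS.2.1⟩, hS.1⟩, fun x _ => mem_univ x, hS.2.2⟩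
  · intro p hp
    simp only [mem_product, mem_filter, mem_powersetCard] at hp
    simp only [mem_filter, mem_univ, true_and, toLeft_disjSum, toRight_disjSum]
    exact ⟨hp.1.2, hp.1.1.2, hp.2.2⟩
  · intro S _
    exact toLeft_disjSum_toRight
  · intro p _
    simp [toLeft_disjSum, toRight_disjSum]

lemma crit_right_eq (ms mr qs qr : ℕ) (hqr : 1 ≤ qr) (r : Fin mr) :
    bicamCrit ms mr qs qr (Sum.inr r) (qs+qr) = ms.choose qs * (mr-1).choose (qr-1) := by
  classical
  have hset : {S : Finset (Fin ms ⊕ Fin mr) |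
      S.card = qs+qr ∧ Sum.inr r ∈ S ∧ bicamWinning ms mr qs qr S ∧
        ¬ bicamWinning ms mr qs qr (S.erase (Sum.inr r))}
      = ↑(Finset.univ.filter (fun S : Finset (Fin ms ⊕ Fin mr) =>
          r ∈ S.toRight ∧ S.toLeft.card = qs ∧ S.toRight.card = qr)) := by
    ext S
    simp only [Set.mem_setOf_eq, coe_filter, mem_univ, true_and]
    unfold bicamWinning
    rw [filterLeft_card, filterRight_card, filterLeft_card, filterRight_card,
        toLeft_erase_inr, toRight_erase_inr]
    have hsum := card_toLeft_add_card_toRight (u := S)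
    constructor
    · rintro ⟨hcard, hmem, ⟨h1, h2⟩, -⟩
      exact ⟨by simpa using hmem, by omega, by omega⟩
    · rintro ⟨hmem, h1, h2⟩
      refine ⟨by omega, by simpa using hmem, ⟨le_of_eq h1.symm, le_of_eq h2.symm⟩, ?_⟩
      rintro ⟨-, h3⟩
      rw [card_erase_of_mem hmem] at h3
      omega
  rw [bicamCrit, hset, Set.ncard_coe_finset]
  have h2 : ms.choose qs = ((Finset.univ : Finset (Fin ms)).powersetCard qs).card := by
    rw [Finset.card_powersetCard, card_univ, Fintype.card_fin]
  rw [← count_mem_subsets hqr r, h2, ← Finset.card_product]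
  refine Finset.card_bij' (fun S _ => (S.toLeft, S.toRight))
    (fun p _ => p.1.disjSum p.2) ?_ ?_ ?_ ?_
  · intro S hS
    simp only [mem_filter, mem_univ, true_and] at hS
    simp only [mem_product, mem_filter, mem_powersetCard]
    exact ⟨⟨fun x _ => mem_univ x, hS.2.1⟩, ⟨fun x _ => mem_univ x, hS.2.2⟩, hS.1⟩
  · intro p hp
    simp only [mem_product, mem_filter, mem_powersetCard] at hp
    simp only [mem_filter, mem_univ, true_and, toLeft_disjSum, toRight_disjSum]
    exact ⟨hp.2.2, hp.1.2, hp.2.1.2⟩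
  · intro S _
    exact toLeft_disjSum_toRight
  · intro p _
    simp [toLeft_disjSum, toRight_disjSum]

/-- The exceptional case: `ms` odd, `mr` even, `ms < mr`, simple-majority quotas.
For minimal winning coalitions (size `qs + qr`): if `mr < 2 * ms`, the representative's
critical number is strictly larger; if `mr = 2 * ms`, they are equal. -/
theorem bicam_exceptional_minimal_coalitions (ms mr qs qr : ℕ)
    (hsize : ms < mr) (hodd : Odd ms) (heven : Even mr)
    (hqs : qs = ms / 2 + 1) (hqr : qr = mr / 2 + 1)
    (s : Fin ms) (r : Fin mr) :
    (mr < 2 * ms →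
      bicamCrit ms mr qs qr (Sum.inl s) (qs + qr) <
        bicamCrit ms mr qs qr (Sum.inr r) (qs + qr)) ∧
    (mr = 2 * ms →
      bicamCrit ms mr qs qr (Sum.inl s) (qs + qr) =
        bicamCrit ms mr qs qr (Sum.inr r) (qs + qr)) := by
  obtain ⟨a, ha⟩ := hodd
  obtain ⟨b, hb⟩ := heven
  have hb2 : mr = 2 * b := by omega
  have hqs' : qs = a + 1 := by omega
  have hqr' : qr = b + 1 := by omega
  have hb1 : 1 ≤ b := by omega
  rw [crit_left_eq ms mr qs qr (by omega) s, crit_right_eq ms mr qs qr (by omega) r]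
  subst ha hb2 hqs' hqr'
  simp only [Nat.add_sub_cancel]
  have e1 : (2*a+1) * (2*a).choose a = (2*a+1).choose (a+1) * (a+1) := by
    simpa using Nat.add_one_mul_choose_eq (2*a) a
  have e2 : (2*b) * (2*b-1).choose b = (2*b).choose (b+1) * (b+1) := by
    have h := Nat.add_one_mul_choose_eq (2*b-1) b
    rw [show 2*b-1+1 = 2*b by omega] at h
    exact h
  have hK1 : 0 < (2*a).choose a := Nat.choose_pos (by omega)
  have hK2 : 0 < (2*b-1).choose b := Nat.choose_pos (by omega)
  have hc : 0 < (a+1)*(b+1) := by positivity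
  have l1 : (2*a).choose a * (2*b).choose (b+1) * ((a+1)*(b+1))
      = ((2*a).choose a * (2*b-1).choose b) * ((2*b)*(a+1)) := by
    rw [show (2*a).choose a * (2*b).choose (b+1) * ((a+1)*(b+1))
        = ((2*a).choose a * (a+1)) * ((2*b).choose (b+1)*(b+1)) from by ring, ← e2]
    ring
  have l2 : (2*a+1).choose (a+1) * (2*b-1).choose b * ((a+1)*(b+1))
      = ((2*a).choose a * (2*b-1).choose b) * ((2*a+1)*(b+1)) := by
    rw [show (2*a+1).choose (a+1) * (2*b-1).choose b * ((a+1)*(b+1))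
        = ((2*a+1).choose (a+1) * (a+1)) * ((2*b-1).choose b*(b+1)) from by ring, ← e1]
    ring
  constructor
  · intro hlt
    have hba : b < 2*a+1 := by omega
    have key : (2*a).choose a * (2*b).choose (b+1) * ((a+1)*(b+1))
        < (2*a+1).choose (a+1) * (2*b-1).choose b * ((a+1)*(b+1)) := by
      rw [l1, l2]
      exact mul_lt_mul_of_pos_left (by nlinarith) (Nat.mul_pos hK1 hK2)
    exact Nat.lt_of_mul_lt_mul_right key
  · intro heq
    have hba : b = 2*a+1 := by omega
    have key : (2*a).choose a * (2*b).choose (b+1) * ((a+1)*(b+1))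
        = (2*a+1).choose (a+1) * (2*b-1).choose b * ((a+1)*(b+1)) := by
      rw [l1, l2, hba]; ring
    exact Nat.eq_of_mul_eq_mul_right hc key
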